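/- arXiv:1505.04764 — 7 statements merged into one kernel-verified Lean document; each statement's English description precedes it below -/
import Mathlib

section
/- Let γ ∈ ℝ, b > 0, and 1 ≤ α < β. Set m = max(α^γ, β^γ), r = 2 + 2bm, and λ̂ = exp(−r(β−α)), and define u(x) = 2 − exp(−r(x−α)) for x ∈ [α, β]. Then u(α) = 1, 1 ≤ u(x) ≤ 2 on [α, β], u'(β) > 0, and for every λ with 0 ≤ λ ≤ λ̂ one has (1/2)u''(x) + b x^γ u'(x) + λ u(x) ≤ 0 for all x ∈ [α, β]. -/
open Real Set

/-- For `γ ∈ ℝ`, `b > 0`, `1 ≤ α < β`, with `m = max(α^γ, β^γ)`, `r = 2 + 2bm`,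
`λ̂ = exp(-r(β-α))`, the function `u(x) = 2 - exp(-r(x-α))` satisfies `u(α) = 1`,
`1 ≤ u ≤ 2` on `[α,β]`, `u'(β) > 0`, and `(1/2)u'' + b x^γ u' + λ u ≤ 0` on `[α,β]`
for every `0 ≤ λ ≤ λ̂`. -/
theorem stmt_3 (γ b α β : ℝ) (hb : 0 < b) (hα : 1 ≤ α) (hαβ : α < β)
    (m r lamhat : ℝ) (hm : m = max (α ^ γ) (β ^ γ)) (hr : r = 2 + 2 * b * m)
    (hlamhat : lamhat = Real.exp (-r * (β - α)))
    (u : ℝ → ℝ) (hu : u = fun x => 2 - Real.exp (-r * (x - α))) :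
    u α = 1 ∧
    (∀ x ∈ Icc α β, 1 ≤ u x ∧ u x ≤ 2) ∧
    0 < deriv u β ∧
    (∀ lam : ℝ, 0 ≤ lam → lam ≤ lamhat →
      ∀ x ∈ Icc α β,
        1 / 2 * deriv (deriv u) x + b * x ^ γ * deriv u x + lam * u x ≤ 0) := by
  have hα0 : (0:ℝ) < α := lt_of_lt_of_le one_pos hα
  have hm0 : 0 < m := by
    rw [hm]; exact lt_of_lt_of_le (Real.rpow_pos_of_pos hα0 γ) (le_max_left _ _)
  have hr2 : 2 ≤ r := by nlinarith
  have hr0 : 0 < r := by linarith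
  -- derivative of inner function
  have hinner : ∀ x : ℝ, HasDerivAt (fun x => -r * (x - α)) (-r) x := by
    intro x
    simpa using ((hasDerivAt_id x).sub_const α).const_mul (-r)
  have hud : ∀ x : ℝ, HasDerivAt u (r * Real.exp (-r * (x - α))) x := by
    intro x
    rw [hu]
    have h2 := (hinner x).exp
    have h3 := (hasDerivAt_const x (2:ℝ)).sub h2
    exact h3.congr_deriv (by ring)
  have hderiv : deriv u = fun x => r * Real.exp (-r * (x - α)) := by
    funext x; exact (hud x).deriv
  have hud2 : ∀ x : ℝ, HasDerivAt (deriv u) (-(r^2) * Real.exp (-r * (x - α))) x := by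
    intro x
    rw [hderiv]
    have h2 := ((hinner x).exp).const_mul r
    exact h2.congr_deriv (by ring)
  have hderiv2 : ∀ x : ℝ, deriv (deriv u) x = -(r^2) * Real.exp (-r * (x - α)) :=
    fun x => (hud2 x).deriv
  refine ⟨by rw [hu]; norm_num, ?_, ?_, ?_⟩
  · intro x hx
    have hE1 : Real.exp (-r * (x - α)) ≤ 1 := by
      apply Real.exp_le_one_iff.mpr
      nlinarith [hx.1]
    have hE0 : 0 < Real.exp (-r * (x - α)) := Real.exp_pos _
    rw [hu]; constructor
    · simp only []; linarith
    · simp only []; linarith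
  · rw [hderiv]
    exact mul_pos hr0 (Real.exp_pos _)
  · intro lam hlam0 hlam hx hxmem
    obtain ⟨hx1, hx2⟩ := hxmem
    set E := Real.exp (-r * (hx - α)) with hE
    have hE0 : 0 < E := Real.exp_pos _
    have hE1 : E ≤ 1 := by
      apply Real.exp_le_one_iff.mpr; nlinarith
    have hElam : lamhat ≤ E := by
      rw [hlamhat]
      apply Real.exp_le_exp.mpr
      nlinarith
    have hxγ : hx ^ γ ≤ m := by
      rw [hm]
      rcases le_or_gt 0 γ with hγ | hγ
      · exact le_trans (Real.rpow_le_rpow (by linarith) hx2 hγ) (le_max_right _ _)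
      · exact le_trans (Real.rpow_le_rpow_of_nonpos hα0 hx1 (le_of_lt hγ)) (le_max_left _ _)
    rw [hderiv2, hderiv, hu]
    simp only [← hE]
    have h1 : b * hx ^ γ * (r * E) ≤ b * m * (r * E) := by
      apply mul_le_mul_of_nonneg_right _ (le_of_lt (mul_pos hr0 hE0))
      exact mul_le_mul_of_nonneg_left hxγ (le_of_lt hb)
    have h2 : lam * (2 - E) ≤ 2 * E := by
      have : lam * (2 - E) ≤ lam * 2 := by nlinarith
      nlinarith
    have hkey : 1/2 * (-(r^2) * E) + b * m * (r * E) + 2 * E ≤ 0 := by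
      have : 1/2 * (-(r^2) * E) + b * m * (r * E) + 2 * E = E * (2 - r) := by
        rw [hr]; ring
      rw [this]
      nlinarith
    linarith
end

section
/- Let γ ∈ ℝ, b > 0, and 1 ≤ α < β. Set r = 1/(β−α) and λ̄ = b · min(α^γ, β^γ) / ((2e−1)(β−α)), and define u(x) = 2 − exp(−r(β−x)) for x ∈ [α, β]. Then u(β) = 1, 1 ≤ u(x) ≤ 2 on [α, β], u'(α) < 0, and for every λ with 0 ≤ λ ≤ λ̄ one has (1/2)u''(x) + b x^γ u'(x) + λ u(x) ≤ 0 for all x ∈ [α, β]. -/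
open Real Set

/-- For `γ ∈ ℝ`, `b > 0`, `1 ≤ α < β`, with `r = 1/(β-α)` and
`λ̄ = b·min(α^γ, β^γ)/((2e-1)(β-α))`, the function `u(x) = 2 - exp(-r(β-x))`
satisfies `u(β) = 1`, `1 ≤ u ≤ 2` on `[α,β]`, `u'(α) < 0`, and
`(1/2)u'' + b x^γ u' + λ u ≤ 0` on `[α,β]` for every `0 ≤ λ ≤ λ̄`. -/
theorem stmt_4 (γ b α β : ℝ) (hb : 0 < b) (hα : 1 ≤ α) (hαβ : α < β)
    (r lambar : ℝ) (hr : r = 1 / (β - α))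
    (hlambar : lambar = b * min (α ^ γ) (β ^ γ) / ((2 * Real.exp 1 - 1) * (β - α)))
    (u : ℝ → ℝ) (hu : u = fun x => 2 - Real.exp (-r * (β - x))) :
    u β = 1 ∧
    (∀ x ∈ Icc α β, 1 ≤ u x ∧ u x ≤ 2) ∧
    deriv u α < 0 ∧
    (∀ lam : ℝ, 0 ≤ lam → lam ≤ lambar →
      ∀ x ∈ Icc α β,
        1 / 2 * deriv (deriv u) x + b * x ^ γ * deriv u x + lam * u x ≤ 0) := by
  have hβα : (0:ℝ) < β - α := by linarith
  have hrpos : 0 < r := by rw [hr]; positivity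
  have hrβα : r * (β - α) = 1 := by rw [hr]; field_simp
  -- derivative computations
  have hd1 : ∀ x : ℝ, HasDerivAt (fun x => -r * (β - x)) r x := by
    intro x
    have h : (fun x : ℝ => -r * (β - x)) = fun x : ℝ => r * x + (-r * β) := by
      funext y; ring
    rw [h]
    simpa using ((hasDerivAt_id x).const_mul r).add_const (-r * β)
  have hd2 : ∀ x : ℝ, HasDerivAt u (-r * Real.exp (-r * (β - x))) x := by
    intro x
    rw [hu]
    have := ((hd1 x).exp).const_sub 2
    exact this.congr_deriv (by ring)
  have hderiv : deriv u = fun x => -r * Real.exp (-r * (β - x)) := by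
    funext x; exact (hd2 x).deriv
  have hd3 : ∀ x : ℝ, HasDerivAt (deriv u) (-r ^ 2 * Real.exp (-r * (β - x))) x := by
    intro x
    rw [hderiv]
    have := ((hd1 x).exp).const_mul (-r)
    exact this.congr_deriv (by ring)
  have hderiv2 : ∀ x : ℝ, deriv (deriv u) x = -r ^ 2 * Real.exp (-r * (β - x)) := by
    intro x; exact (hd3 x).deriv
  refine ⟨by rw [hu]; norm_num, ?_, ?_, ?_⟩
  · intro x hx
    have h1 : Real.exp (-r * (β - x)) ≤ 1 := by
      apply Real.exp_le_one_iff.mpr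
      nlinarith [hx.2]
    have h2 : 0 < Real.exp (-r * (β - x)) := Real.exp_pos _
    simp only [hu]
    constructor <;> linarith
  · rw [hderiv]
    exact mul_neg_of_neg_of_pos (by linarith) (Real.exp_pos _)
  · intro lam hlam0 hlam x hx
    rw [hderiv2 x, hderiv, hu]
    simp only
    set E := Real.exp (-r * (β - x)) with hE
    set m := min (α ^ γ) (β ^ γ) with hm
    have hαpos : (0:ℝ) < α := by linarith
    have hxpos : (0:ℝ) < x := by linarith [hx.1]
    have hmx : m ≤ x ^ γ := by
      rcases le_or_gt 0 γ with hγ | hγ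
      · exact le_trans (min_le_left _ _) (Real.rpow_le_rpow hαpos.le hx.1 hγ)
      · exact le_trans (min_le_right _ _)
          (Real.rpow_le_rpow_of_nonpos hxpos hx.2 hγ.le)
    have hmpos : 0 < m := lt_min (Real.rpow_pos_of_pos hαpos γ) (Real.rpow_pos_of_pos (by linarith) γ)
    have hE1 : E ≤ 1 := by
      apply Real.exp_le_one_iff.mpr; nlinarith [hx.2]
    have hEge : Real.exp (-1) ≤ E := by
      apply Real.exp_le_exp.mpr; nlinarith [hx.1]
    have hEpos : 0 < E := Real.exp_pos _
    have hepos : (0:ℝ) < Real.exp 1 := Real.exp_pos 1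
    have he1 : 1 < Real.exp 1 := by have := Real.add_one_le_exp 1; linarith
    have hee : Real.exp (-1) * Real.exp 1 = 1 := by
      rw [← Real.exp_add]; norm_num
    have hden : (2 * Real.exp 1 - 1) ≠ 0 := by linarith
    have hlampos : 0 ≤ lambar := le_trans hlam0 hlam
    -- key: lam * (2 - E) ≤ b * x^γ * r * E
    have key : lam * (2 - E) ≤ b * x ^ γ * r * E := by
      have t1 : lam * (2 - E) ≤ lambar * (2 - E) :=
        mul_le_mul_of_nonneg_right hlam (by linarith)
      have t2 : lambar * (2 - E) ≤ lambar * (2 - Real.exp (-1)) :=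
        mul_le_mul_of_nonneg_left (by linarith) hlampos
      have s2 : lambar * (2 - Real.exp (-1)) = b * m * r * Real.exp (-1) := by
        have h2e : (2:ℝ) - Real.exp (-1) = (2 * Real.exp 1 - 1) * Real.exp (-1) := by
          linear_combination (-2 : ℝ) * hee
        rw [hlambar, hr, h2e]
        field_simp
      have hmE : m * Real.exp (-1) ≤ x ^ γ * E :=
        mul_le_mul hmx hEge (Real.exp_pos _).le (hmpos.le.trans hmx)
      have s3 : b * m * r * Real.exp (-1) ≤ b * x ^ γ * r * E := by
        have h := mul_le_mul_of_nonneg_left hmE (show (0:ℝ) ≤ b * r by positivity)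
        nlinarith [h]
      linarith
    have h0 : 0 ≤ r ^ 2 * E := by positivity
    have hrw : b * x ^ γ * (-r * E) = -(b * x ^ γ * r * E) := by ring
    linarith [key, h0, hrw]
end

section
/- Let α < β, let B : [α, β] → ℝ be continuous, and let λ ∈ ℝ. Suppose u is twice continuously differentiable on [α, β] with u(x) > 0 for all x ∈ [α, β], (1/2)u''(x) + B(x)u'(x) + λu(x) ≤ 0 on [α, β], and u'(β) ≥ 0. Suppose v is twice continuously differentiable on [α, β] with v(x) ≥ 0 on [α, β], (1/2)v''(x) + B(x)v'(x) + λv(x) = 0 on [α, β], v(α) ≤ u(α), and v'(β) = 0. Then v(x) ≤ u(x) for all x ∈ [α, β]. -/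
open Real Set

/-- Generalized maximum principle: if `u` is a positive C² supersolution of
`(1/2)u'' + B u' + λ u ≤ 0` on `[α,β]` with `u'(β) ≥ 0`, and `v` is a nonnegative C²
solution of `(1/2)v'' + B v' + λ v = 0` on `[α,β]` with `v(α) ≤ u(α)` and `v'(β) = 0`,
then `v ≤ u` on `[α,β]`. -/
theorem stmt_5 (α β lam : ℝ) (hαβ : α < β) (B : ℝ → ℝ)
    (hB : ContinuousOn B (Icc α β))
    (u v : ℝ → ℝ)
    (hu2 : ContDiffOn ℝ 2 u (Icc α β))
    (hupos : ∀ x ∈ Icc α β, 0 < u x)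
    (husuper : ∀ x ∈ Icc α β,
      1 / 2 * derivWithin (derivWithin u (Icc α β)) (Icc α β) x +
        B x * derivWithin u (Icc α β) x + lam * u x ≤ 0)
    (hub : 0 ≤ derivWithin u (Icc α β) β)
    (hv2 : ContDiffOn ℝ 2 v (Icc α β))
    (hvnonneg : ∀ x ∈ Icc α β, 0 ≤ v x)
    (hvsol : ∀ x ∈ Icc α β,
      1 / 2 * derivWithin (derivWithin v (Icc α β)) (Icc α β) x +
        B x * derivWithin v (Icc α β) x + lam * v x = 0)
    (hvα : v α ≤ u α)
    (hvb : derivWithin v (Icc α β) β = 0) :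
    ∀ x ∈ Icc α β, v x ≤ u x := by
  set K : Set ℝ := Icc α β with hKdef
  have hK : UniqueDiffOn ℝ K := uniqueDiffOn_Icc hαβ
  have hαK : α ∈ K := left_mem_Icc.mpr hαβ.le
  have hβK : β ∈ K := right_mem_Icc.mpr hαβ.le
  -- extend B continuously to all of ℝ
  obtain ⟨B', hB'⟩ := ContinuousMap.exists_restrict_eq (Y := ℝ)
    (isClosed_Icc : IsClosed K) ⟨fun x : K => B x, hB.restrict⟩
  have hBeq : ∀ x ∈ K, B' x = B x := by
    intro x hx
    exact congrFun (congrArg DFunLike.coe hB') ⟨x, hx⟩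
  -- notation for derivatives
  set U : ℝ → ℝ := derivWithin u K with hU
  set V : ℝ → ℝ := derivWithin v K with hV
  set U' : ℝ → ℝ := derivWithin U K with hU'
  set V' : ℝ → ℝ := derivWithin V K with hV'
  have hu1 : ContDiffOn ℝ 1 U K := hu2.derivWithin hK (by norm_num)
  have hv1 : ContDiffOn ℝ 1 V K := hv2.derivWithin hK (by norm_num)
  have hud : ∀ x ∈ K, HasDerivWithinAt u (U x) K x := fun x hx =>
    ((hu2.differentiableOn two_ne_zero) x hx).hasDerivWithinAt
  have hvd : ∀ x ∈ K, HasDerivWithinAt v (V x) K x := fun x hx =>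
    ((hv2.differentiableOn two_ne_zero) x hx).hasDerivWithinAt
  have hUd : ∀ x ∈ K, HasDerivWithinAt U (U' x) K x := fun x hx =>
    ((hu1.differentiableOn one_ne_zero) x hx).hasDerivWithinAt
  have hVd : ∀ x ∈ K, HasDerivWithinAt V (V' x) K x := fun x hx =>
    ((hv1.differentiableOn one_ne_zero) x hx).hasDerivWithinAt
  -- the Wronskian-type function h and the integrating factor
  set h : ℝ → ℝ := fun x => u x * V x - v x * U x with hh
  set E : ℝ → ℝ := fun x => ∫ t in α..x, 2 * B' t with hE
  have hB'c : Continuous fun t => 2 * B' t := continuous_const.mul B'.continuous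
  have hEd : ∀ x, HasDerivAt E (2 * B' x) x := by
    intro x
    exact intervalIntegral.integral_hasDerivAt_right
      (hB'c.intervalIntegrable α x) (hB'c.stronglyMeasurableAtFilter _ _)
      hB'c.continuousAt
  set F : ℝ → ℝ := fun x => Real.exp (E x) * h x with hF
  have hFd : ∀ x ∈ K, HasDerivWithinAt F
      (Real.exp (E x) * (2 * B' x * h x + (u x * V' x - v x * U' x))) K x := by
    intro x hx
    have hhd : HasDerivWithinAt h
        (U x * V x + u x * V' x - (V x * U x + v x * U' x)) K x :=
      ((hud x hx).mul (hVd x hx)).sub ((hvd x hx).mul (hUd x hx))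
    have hexp : HasDerivWithinAt (fun y => Real.exp (E y))
        (Real.exp (E x) * (2 * B' x)) K x := ((hEd x).hasDerivWithinAt).exp
    have : HasDerivWithinAt (fun y => Real.exp (E y) * h y) _ K x := hexp.mul hhd
    convert this using 1
    simp only [hh]
    ring
  -- the derivative of F is nonnegative on K
  have hF'nonneg : ∀ x ∈ K,
      0 ≤ Real.exp (E x) * (2 * B' x * h x + (u x * V' x - v x * U' x)) := by
    intro x hx
    have h1 := husuper x hx
    have h2 := hvsol x hx
    have h3 := hvnonneg x hx
    have h4 : 0 ≤ v x * (-(1 / 2 * U' x + B x * U x + lam * u x)) :=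
      mul_nonneg h3 (by rw [hU', hU]; linarith)
    have h5 : u x * (1 / 2 * V' x + B x * V x + lam * v x) = 0 := by
      rw [hV', hV, h2, mul_zero]
    have hP : 0 ≤ 2 * B' x * h x + (u x * V' x - v x * U' x) := by
      rw [hBeq x hx]
      simp only [hh]
      nlinarith [h4, h5]
    exact mul_nonneg (Real.exp_pos _).le hP
  -- continuity of F on K
  have hEcont : Continuous E := by
    exact continuous_iff_continuousAt.mpr fun x => (hEd x).continuousAt
  have hhcont : ContinuousOn h K :=
    (hu2.continuousOn.mul hv1.continuousOn).sub (hv2.continuousOn.mul hu1.continuousOn)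
  have hFcont : ContinuousOn F K :=
    ((hEcont.rexp).continuousOn).mul hhcont
  -- F is monotone on K
  have hint : ∀ x ∈ interior K, K ∈ nhds x := by
    intro x hx
    rw [hKdef, interior_Icc] at hx
    exact Icc_mem_nhds hx.1 hx.2
  have hFda : ∀ x ∈ interior K, HasDerivAt F
      (Real.exp (E x) * (2 * B' x * h x + (u x * V' x - v x * U' x))) x := fun x hx =>
    (hFd x (interior_subset hx)).hasDerivAt (hint x hx)
  have hFmono : MonotoneOn F K := by
    refine monotoneOn_of_deriv_nonneg (convex_Icc α β) hFcont
      (fun x hx => ((hFda x hx).differentiableAt).differentiableWithinAt) ?_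
    intro x hx
    rw [(hFda x hx).deriv]
    exact hF'nonneg x (interior_subset hx)
  -- h ≤ 0 on K
  have hFβ : F β ≤ 0 := by
    have hVβ : V β = 0 := hvb
    have h0 : h β = -(v β * U β) := by simp only [hh, hVβ]; ring
    show Real.exp (E β) * h β ≤ 0
    rw [h0]
    have := mul_nonneg (hvnonneg β hβK) hub
    nlinarith [Real.exp_pos (E β)]
  have hhle : ∀ x ∈ K, h x ≤ 0 := by
    intro x hx
    have hFx : Real.exp (E x) * h x ≤ 0 := le_trans (hFmono hx hβK hx.2) hFβ
    nlinarith [Real.exp_pos (E x), hFx]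
  -- the ratio G = v/u is antitone on K
  set G : ℝ → ℝ := fun x => v x / u x with hG
  have hGd : ∀ x ∈ K, HasDerivWithinAt G
      ((V x * u x - v x * U x) / (u x) ^ 2) K x := fun x hx =>
    (hvd x hx).div (hud x hx) (hupos x hx).ne'
  have hGda : ∀ x ∈ interior K, HasDerivAt G
      ((V x * u x - v x * U x) / (u x) ^ 2) x := fun x hx =>
    (hGd x (interior_subset hx)).hasDerivAt (hint x hx)
  have hGcont : ContinuousOn G K :=
    hv2.continuousOn.div hu2.continuousOn (fun x hx => (hupos x hx).ne')
  have hGanti : AntitoneOn G K := by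
    refine antitoneOn_of_deriv_nonpos (convex_Icc α β) hGcont
      (fun x hx => ((hGda x hx).differentiableAt).differentiableWithinAt) ?_
    intro x hx
    rw [(hGda x hx).deriv]
    have hxK : x ∈ K := interior_subset hx
    have hnum : u x * V x - v x * U x ≤ 0 := hhle x hxK
    apply div_nonpos_iff.mpr
    right
    constructor
    · linarith
    · exact sq_nonneg _
  -- conclude
  intro x hx
  have h1 : G x ≤ G α := hGanti hαK hx hx.1
  have h2 : G α ≤ 1 := (div_le_one (hupos α hαK)).mpr hvα
  have h3 : v x / u x ≤ 1 := le_trans h1 h2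
  exact (div_le_one (hupos x hx)).mp h3
end

section
/- Fix λ > 0 and for D > 0 define E(D) = 2√(D²+2λ) e^{−2D} / ((−D+√(D²+2λ)) e^{−D+√(D²+2λ)} + (D+√(D²+2λ)) e^{−D−√(D²+2λ)}). Then lim_{D→∞} E(D) · (λ e^{2D})/(2D²) = 1; that is, E(D) ∼ (2D²/λ) e^{−2D} as D → ∞. -/
open Real Filter

/-- For fixed `λ > 0`, the quantity
`E(D) = 2√(D²+2λ) e^{-2D} / ((-D+√(D²+2λ)) e^{-D+√(D²+2λ)} + (D+√(D²+2λ)) e^{-D-√(D²+2λ)})`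
satisfies `E(D) ∼ (2D²/λ) e^{-2D}` as `D → ∞`. -/
theorem stmt_6 (lam : ℝ) (hlam : 0 < lam)
    (E : ℝ → ℝ)
    (hE : E = fun D => 2 * Real.sqrt (D ^ 2 + 2 * lam) * Real.exp (-2 * D) /
      ((-D + Real.sqrt (D ^ 2 + 2 * lam)) * Real.exp (-D + Real.sqrt (D ^ 2 + 2 * lam)) +
        (D + Real.sqrt (D ^ 2 + 2 * lam)) * Real.exp (-D - Real.sqrt (D ^ 2 + 2 * lam)))) :
    Tendsto (fun D : ℝ => E D * (lam * Real.exp (2 * D)) / (2 * D ^ 2))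
      atTop (nhds 1) := by
  set s : ℝ → ℝ := fun D => Real.sqrt (D ^ 2 + 2 * lam) with hs
  have hnn : ∀ D : ℝ, (0:ℝ) ≤ D ^ 2 + 2 * lam := fun D => by positivity
  have hsq : ∀ D : ℝ, s D ^ 2 = D ^ 2 + 2 * lam := fun D => Real.sq_sqrt (hnn D)
  have hgt : ∀ D : ℝ, 0 ≤ D → D < s D := by
    intro D hD
    have h0 : 0 ≤ s D := Real.sqrt_nonneg _
    nlinarith [hsq D]
  have hsum : Tendsto (fun D => s D + D) atTop atTop := by
    apply tendsto_atTop_mono (fun D => ?_) tendsto_id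
    have := Real.sqrt_nonneg (D ^ 2 + 2 * lam)
    simp only [s, id]; linarith
  have hratio : Tendsto (fun D => s D / D) atTop (nhds 1) := by
    have h1 : Tendsto (fun D : ℝ => 1 + 2 * lam / D ^ 2) atTop (nhds 1) := by
      have := (tendsto_const_nhds (x := 2 * lam) (f := atTop (α := ℝ))).div_atTop
        (tendsto_pow_atTop (n := 2) (by norm_num))
      simpa using tendsto_const_nhds.add this
    have h2 : Tendsto (fun D : ℝ => Real.sqrt (1 + 2 * lam / D ^ 2)) atTop (nhds 1) := by
      have := (Real.continuous_sqrt.tendsto 1).comp h1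
      simpa [Function.comp_def] using this
    apply h2.congr'
    filter_upwards [eventually_gt_atTop (0:ℝ)] with D hD
    rw [show (1 : ℝ) + 2 * lam / D ^ 2 = (D ^ 2 + 2 * lam) / D ^ 2 by field_simp,
      Real.sqrt_div (hnn D), Real.sqrt_sq hD.le]
  have hdiff : Tendsto (fun D => s D - D) atTop (nhds 0) := by
    have h0 : Tendsto (fun D => 2 * lam / (s D + D)) atTop (nhds 0) :=
      tendsto_const_nhds.div_atTop hsum
    apply h0.congr'
    filter_upwards [eventually_gt_atTop (0:ℝ)] with D hD
    have h1 : s D + D ≠ 0 := by nlinarith [hgt D hD.le]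
    field_simp
    nlinarith [hsq D]
  have hexp : Tendsto (fun D => Real.exp (s D - D)) atTop (nhds 1) := by
    have := (Real.continuous_exp.tendsto 0).comp hdiff
    simpa [Function.comp_def] using this
  have htail : Tendsto (fun D => (s D + D) ^ 2 * Real.exp (-(D + s D))) atTop (nhds 0) := by
    have := (tendsto_pow_mul_exp_neg_atTop_nhds_zero 2).comp hsum
    apply this.congr
    intro D
    simp [Function.comp, add_comm]
  set g : ℝ → ℝ := fun D => 2 * lam * Real.exp (s D - D) + (s D + D) ^ 2 * Real.exp (-(D + s D)) with hg
  have hgl : Tendsto g atTop (nhds (2 * lam)) := by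
    have h1 : Tendsto (fun D => 2 * lam * Real.exp (s D - D)) atTop (nhds (2 * lam * 1)) :=
      (tendsto_const_nhds (x := 2 * lam)).mul hexp
    have h2 := h1.add htail
    rw [show (2 : ℝ) * lam * 1 + 0 = 2 * lam by ring] at h2
    exact h2
  have hmodel : Tendsto (fun D => lam * (s D / D) * (s D / D + 1) / g D) atTop (nhds 1) := by
    have h2l : (2 : ℝ) * lam ≠ 0 := by positivity
    have := (((tendsto_const_nhds (x := lam)).mul hratio).mul (hratio.add (tendsto_const_nhds (x := (1:ℝ))))).div hgl h2l
    have e : lam * 1 * (1 + 1) / (2 * lam) = 1 := by field_simp; ring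
    rwa [e] at this
  refine Tendsto.congr' ?_ hmodel
  filter_upwards [eventually_gt_atTop (0:ℝ)] with D hD
  have hDs := hgt D hD.le
  have hD0 : D ≠ 0 := ne_of_gt hD
  have hsd0 : (0:ℝ) < s D + D := by linarith
  have hdenom : 0 < (-D + s D) * Real.exp (-D + s D) + (D + s D) * Real.exp (-D - s D) := by
    have e1 := Real.exp_pos (-D + s D)
    have e2 := Real.exp_pos (-D - s D)
    have h1 : 0 < -D + s D := by linarith
    positivity
  have hgden : g D = (s D + D) *
      ((-D + s D) * Real.exp (-D + s D) + (D + s D) * Real.exp (-D - s D)) := by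
    rw [hg]
    simp only
    rw [show s D - D = -D + s D by ring, show -(D + s D) = -D - s D by ring]
    linear_combination (-Real.exp (-D + s D)) * hsq D
  rw [hE]
  simp only
  have hfold : Real.sqrt (D ^ 2 + 2 * lam) = s D := rfl
  rw [hfold, hgden, show (-2:ℝ) * D = -(2 * D) by ring, Real.exp_neg]
  set Q : ℝ := (-D + s D) * Real.exp (-D + s D) + (D + s D) * Real.exp (-D - s D) with hQ
  have hQ0 : Q ≠ 0 := ne_of_gt hdenom
  clear_value Q
  set u : ℝ := Real.exp (2 * D) with hu
  have hu0 : u ≠ 0 := ne_of_gt (Real.exp_pos _)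
  clear_value u
  have hsd0' : s D + D ≠ 0 := ne_of_gt hsd0
  field_simp
end

section
/- Let γ > −1 and b, c > 0, and set f_j = c·j^{1/(1+γ)} for positive integers j. Then there exist K₀ ∈ (0, 1) and J ∈ ℕ such that φ(f_{j+1}) ≤ K₀ · φ(f_j) for all j ≥ J. -/
open Real Set MeasureTheory Filter Asymptotics Topology

lemma aux_int {a p : ℝ} (ha : 0 < a) (hp : 0 < p) {x : ℝ} (hx : 0 < x) :
    IntegrableOn (fun t => Real.exp (-a * t ^ p)) (Ioi x) := by
  have hcont : ContinuousOn (fun t : ℝ => Real.exp (-a * t ^ p)) (Ici x) := by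
    apply Real.continuous_exp.comp_continuousOn
    exact (continuousOn_id.rpow_const (fun t ht => Or.inl (lt_of_lt_of_le hx ht).ne')).const_smul (-a)
  have hloc : LocallyIntegrableOn (fun t : ℝ => Real.exp (-a * t ^ p)) (Ici x) :=
    hcont.locallyIntegrableOn measurableSet_Ici
  have hO : (fun t : ℝ => Real.exp (-a * t ^ p)) =O[atTop] fun t : ℝ => t ^ (-2 : ℝ) := by
    have h1 := ((isLittleO_exp_neg_mul_rpow_atTop ha ((-2)/p)).isBigO).comp_tendsto
      (tendsto_rpow_atTop hp)
    refine h1.congr' (by rfl) ?_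
    filter_upwards [eventually_gt_atTop (0:ℝ)] with t ht
    simp only [Function.comp]
    rw [← Real.rpow_mul ht.le, mul_div_cancel₀ _ hp.ne']
  have hg : IntegrableAtFilter (fun t : ℝ => t ^ (-2 : ℝ)) atTop :=
    ⟨Ioi 1, Ioi_mem_atTop 1, integrableOn_Ioi_rpow_of_lt (by norm_num) one_pos⟩
  exact (hloc.integrableOn_of_isBigO_atTop hO hg).mono Ioi_subset_Ici_self le_rfl

lemma aux_deriv {a p : ℝ} (ha : 0 < a) (hp : 0 < p) {t : ℝ} (ht : 0 < t) :
    HasDerivAt (fun t : ℝ => t ^ (1 - p) * Real.exp (-a * t ^ p) / (a * p))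
      (-(Real.exp (-a * t ^ p) * (1 + (p - 1) * t ^ (-p) / (a * p)))) t := by
  have h1 : HasDerivAt (fun t : ℝ => t ^ (1 - p)) ((1 - p) * t ^ (1 - p - 1)) t :=
    Real.hasDerivAt_rpow_const (Or.inl ht.ne')
  have h2 : HasDerivAt (fun t : ℝ => t ^ p) (p * t ^ (p - 1)) t :=
    Real.hasDerivAt_rpow_const (Or.inl ht.ne')
  have h3 : HasDerivAt (fun t : ℝ => Real.exp (-a * t ^ p))
      (Real.exp (-a * t ^ p) * (-a * (p * t ^ (p - 1)))) t :=
    (h2.const_mul (-a)).exp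
  have h4 := (h1.mul h3).div_const (a * p)
  refine h4.congr_deriv ?_
  symm
  have e1 : t ^ (1 - p) * t ^ (p - 1) = 1 := by
    rw [← Real.rpow_add ht]; norm_num
  have e2 : t ^ (1 - p - 1) = t ^ (-p) := by norm_num
  rw [e2]
  have e3 : t ^ (1 - p) * (Real.exp (-a * t ^ p) * (-a * (p * t ^ (p - 1))))
      = -(a * p) * Real.exp (-a * t ^ p) * (t ^ (1 - p) * t ^ (p - 1)) := by ring
  rw [e3, e1]
  field_simp
  ring

lemma aux_tendsto {a p : ℝ} (ha : 0 < a) (hp : 0 < p) :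
    Tendsto (fun t : ℝ => t ^ (1 - p) * Real.exp (-a * t ^ p) / (a * p)) atTop (𝓝 0) := by
  have h1 : Tendsto (fun u : ℝ => u ^ ((1 - p) / p) * Real.exp (-a * u)) atTop (𝓝 0) :=
    tendsto_rpow_mul_exp_neg_mul_atTop_nhds_zero _ a ha
  have h2 := (h1.comp (tendsto_rpow_atTop hp)).div_const (a * p)
  rw [zero_div] at h2
  refine h2.congr' ?_
  filter_upwards [eventually_gt_atTop (0:ℝ)] with t ht
  simp only [Function.comp]
  rw [← Real.rpow_mul ht.le, mul_div_cancel₀ _ hp.ne']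

lemma aux_int_w {a p : ℝ} (ha : 0 < a) (hp : 0 < p) {x : ℝ} (hx : 0 < x) :
    IntegrableOn (fun t => Real.exp (-a * t ^ p) * (1 + (p - 1) * t ^ (-p) / (a * p)))
      (Ioi x) := by
  have hmeas : AEStronglyMeasurable
      (fun t : ℝ => Real.exp (-a * t ^ p) * (1 + (p - 1) * t ^ (-p) / (a * p)))
      (volume.restrict (Ioi x)) := by
    apply ContinuousOn.aestronglyMeasurable _ measurableSet_Ioi
    apply ContinuousOn.mul
    · exact Real.continuous_exp.comp_continuousOn
        ((continuousOn_id.rpow_const (fun t ht => Or.inl (hx.trans ht).ne')).const_smul (-a))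
    · exact continuousOn_const.add (((continuousOn_id.rpow_const
        (fun t ht => Or.inl (hx.trans ht).ne')).const_smul (p-1)).div_const (a*p))
  refine Integrable.mono'
      (g := fun t => (1 + |p - 1| * x ^ (-p) / (a * p)) * Real.exp (-a * t ^ p))
      ((aux_int ha hp hx).const_mul _) hmeas ?_
  · filter_upwards [ae_restrict_mem measurableSet_Ioi] with t ht
    have htx : x < t := ht
    have ht0 : 0 < t := hx.trans htx
    have hle : t ^ (-p) ≤ x ^ (-p) :=
      Real.rpow_le_rpow_of_nonpos hx htx.le (neg_nonpos.mpr hp.le)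
    have htp : (0:ℝ) ≤ t ^ (-p) := (Real.rpow_pos_of_pos ht0 _).le
    rw [Real.norm_eq_abs, abs_mul, abs_of_pos (Real.exp_pos _), mul_comm
      (1 + |p - 1| * x ^ (-p) / (a * p))]
    apply mul_le_mul_of_nonneg_left _ (Real.exp_pos _).le
    calc |1 + (p - 1) * t ^ (-p) / (a * p)| ≤ |(1:ℝ)| + |(p - 1) * t ^ (-p) / (a * p)| :=
          abs_add_le _ _
      _ = 1 + |p - 1| * t ^ (-p) / (a * p) := by
          rw [abs_one, abs_div, abs_mul, abs_of_nonneg htp,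
            abs_of_pos (mul_pos ha hp)]
      _ ≤ 1 + |p - 1| * x ^ (-p) / (a * p) := by
          gcongr

lemma aux_ftc {a p : ℝ} (ha : 0 < a) (hp : 0 < p) {x : ℝ} (hx : 0 < x) :
    ∫ t in Ioi x, Real.exp (-a * t ^ p) * (1 + (p - 1) * t ^ (-p) / (a * p))
      = x ^ (1 - p) * Real.exp (-a * x ^ p) / (a * p) := by
  have h := integral_Ioi_of_hasDerivAt_of_tendsto'
      (f := fun t : ℝ => t ^ (1 - p) * Real.exp (-a * t ^ p) / (a * p))
      (f' := fun t : ℝ => -(Real.exp (-a * t ^ p) * (1 + (p - 1) * t ^ (-p) / (a * p))))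
      (fun t ht => aux_deriv ha hp (lt_of_lt_of_le hx ht))
      ((aux_int_w ha hp hx).neg) (aux_tendsto ha hp)
  rw [integral_neg, zero_sub, neg_inj] at h
  exact h

lemma aux_sandwich {a p ε : ℝ} (ha : 0 < a) (hp : 0 < p) {x : ℝ} (hx : 0 < x)
    (hε : |p - 1| * x ^ (-p) / (a * p) ≤ ε) :
    (1 - ε) * (∫ t in Ioi x, Real.exp (-a * t ^ p))
      ≤ x ^ (1 - p) * Real.exp (-a * x ^ p) / (a * p) ∧
    x ^ (1 - p) * Real.exp (-a * x ^ p) / (a * p)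
      ≤ (1 + ε) * (∫ t in Ioi x, Real.exp (-a * t ^ p)) := by
  have key : ∀ t ∈ Ioi x, |(p - 1) * t ^ (-p) / (a * p)| ≤ ε := by
    intro t ht
    have ht0 : 0 < t := hx.trans ht
    have hle : t ^ (-p) ≤ x ^ (-p) :=
      Real.rpow_le_rpow_of_nonpos hx (le_of_lt ht) (neg_nonpos.mpr hp.le)
    have htp : (0:ℝ) ≤ t ^ (-p) := (Real.rpow_pos_of_pos ht0 _).le
    rw [abs_div, abs_mul, abs_of_nonneg htp, abs_of_pos (mul_pos ha hp)]
    refine le_trans ?_ hε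
    gcongr
  rw [← aux_ftc ha hp hx]
  constructor
  · rw [← integral_const_mul]
    refine setIntegral_mono_on ((aux_int ha hp hx).const_mul _) (aux_int_w ha hp hx)
      measurableSet_Ioi (fun t ht => ?_)
    have h1 := (abs_le.mp (key t ht)).1
    have hE := (Real.exp_pos (-a * t ^ p)).le
    nlinarith [hE]
  · rw [← integral_const_mul]
    refine setIntegral_mono_on (aux_int_w ha hp hx) ((aux_int ha hp hx).const_mul _)
      measurableSet_Ioi (fun t ht => ?_)
    have h1 := (abs_le.mp (key t ht)).2
    have hE := (Real.exp_pos (-a * t ^ p)).le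
    nlinarith [hE]

/-- For `γ > -1`, `b, c > 0`, with `φ(x) = ∫_x^∞ exp(-(2b/(1+γ)) t^{1+γ}) dt` and
`f_j = c j^{1/(1+γ)}`, there exist `K₀ ∈ (0,1)` and `J ∈ ℕ` such that
`φ(f_{j+1}) ≤ K₀ φ(f_j)` for all `j ≥ J`. -/
theorem stmt_10 (γ b c : ℝ) (hγ : -1 < γ) (hb : 0 < b) (hc : 0 < c)
    (φ : ℝ → ℝ)
    (hφ : φ = fun x => ∫ t in Ioi x, Real.exp (-(2 * b / (1 + γ)) * t ^ (1 + γ)))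
    (f : ℕ → ℝ) (hf : f = fun j : ℕ => c * (j : ℝ) ^ (1 / (1 + γ))) :
    ∃ K₀ ∈ Set.Ioo (0 : ℝ) 1, ∃ J : ℕ, ∀ j : ℕ, J ≤ j →
      φ (f (j + 1)) ≤ K₀ * φ (f j) := by
  subst hφ hf
  set p : ℝ := 1 + γ with hpdef
  have hp : 0 < p := by simp only [hpdef]; linarith
  set a : ℝ := 2 * b / p with hadef
  have ha : 0 < a := by positivity
  have hcp : 0 < c ^ p := Real.rpow_pos_of_pos hc p
  set s : ℝ := a * c ^ p / 4 with hsdef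
  have hs : 0 < s := by positivity
  have hEs : 1 < Real.exp s := by nlinarith [Real.add_one_le_exp s]
  set ε : ℝ := (Real.exp s - 1) / (Real.exp s + 1) with hεdef
  have hε0 : 0 < ε := by
    apply div_pos <;> linarith
  have hε1 : ε < 1 := by
    rw [hεdef, div_lt_one (by linarith)]; linarith
  have hplus : 1 + ε = Real.exp s * (1 - ε) := by
    rw [hεdef]; field_simp; ring
  set K₀ : ℝ := Real.exp (-(a * c ^ p) / 2) with hKdef
  refine ⟨K₀, ⟨Real.exp_pos _, by
    rw [hKdef, Real.exp_lt_one_iff]; nlinarith⟩, ?_⟩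
  -- eventually conditions
  have hC : Tendsto (fun j : ℕ => |p - 1| * (c ^ (-p) / (j : ℝ)) / (a * p)) atTop (𝓝 0) := by
    have h0 : Tendsto (fun j : ℕ => c ^ (-p) / (j : ℝ)) atTop (𝓝 0) :=
      tendsto_const_div_atTop_nhds_zero_nat _
    have := (h0.const_mul (|p - 1|)).div_const (a * p)
    simpa using this
  have hcond1 : ∀ᶠ j : ℕ in atTop,
      |p - 1| * (c * (j : ℝ) ^ (1 / p)) ^ (-p) / (a * p) ≤ ε := by
    have h1 : ∀ᶠ j : ℕ in atTop,
        |p - 1| * (c ^ (-p) / (j : ℝ)) / (a * p) ≤ ε :=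
      hC.eventually_le_const hε0
    filter_upwards [h1, eventually_ge_atTop 1] with j hj hj1
    have hjR : (0:ℝ) < (j : ℝ) := by exact_mod_cast hj1
    have : (c * (j : ℝ) ^ (1 / p)) ^ (-p) = c ^ (-p) / (j : ℝ) := by
      rw [Real.mul_rpow hc.le (Real.rpow_nonneg hjR.le _), ← Real.rpow_mul hjR.le,
        show (1 / p) * (-p) = -1 by field_simp, Real.rpow_neg_one]
      ring
    rwa [this]
  have hcond3 : ∀ᶠ j : ℕ in atTop,
      (((j : ℝ) + 1) / (j : ℝ)) ^ ((1 - p) / p) ≤ Real.exp s := by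
    have h0 : Tendsto (fun j : ℕ => ((j : ℝ) + 1) / (j : ℝ)) atTop (𝓝 1) := by
      have h1 : Tendsto (fun j : ℕ => 1 + 1 / (j : ℝ)) atTop (𝓝 1) := by
        have := tendsto_one_div_atTop_nhds_zero_nat.const_add (1:ℝ)
        simpa using this
      refine h1.congr' ?_
      filter_upwards [eventually_ge_atTop 1] with j hj
      have hjR : (0:ℝ) < (j : ℝ) := by exact_mod_cast hj
      field_simp
    have h2 := h0.rpow_const (p := (1 - p) / p) (Or.inl one_ne_zero)
    rw [Real.one_rpow] at h2
    exact h2.eventually_le_const hEs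
  obtain ⟨J, hJ⟩ := eventually_atTop.mp ((hcond1.and hcond3).and (eventually_ge_atTop 1))
  refine ⟨J, fun j hj => ?_⟩
  obtain ⟨⟨hc1, hc3⟩, hj1⟩ := hJ j hj
  obtain ⟨⟨hc1', _⟩, _⟩ := hJ (j + 1) (le_trans hj (Nat.le_succ j))
  have hjR : (0:ℝ) < (j : ℝ) := by exact_mod_cast hj1
  have hjR1 : (0:ℝ) < (j : ℝ) + 1 := by linarith
  simp only []
  push_cast
  set x : ℝ := c * (j : ℝ) ^ (1 / p) with hxdef
  set y : ℝ := c * ((j : ℝ) + 1) ^ (1 / p) with hydef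
  have hx : 0 < x := by positivity
  have hy : 0 < y := by positivity
  have hφx : (0:ℝ) ≤ ∫ t in Ioi x, Real.exp (-a * t ^ p) :=
    setIntegral_nonneg measurableSet_Ioi (fun t _ => (Real.exp_pos _).le)
  have h1 := (aux_sandwich (ε := ε) ha hp hy (by push_cast at hc1'; rwa [← hydef] at hc1')).1
  have h2 := (aux_sandwich (ε := ε) ha hp hx hc1).2
  -- key algebraic identity for H y
  have hxp : x ^ p = c ^ p * (j : ℝ) := by
    rw [hxdef, Real.mul_rpow hc.le (Real.rpow_nonneg hjR.le _), ← Real.rpow_mul hjR.le,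
      one_div_mul_cancel hp.ne', Real.rpow_one]
  have hyp : y ^ p = c ^ p * ((j : ℝ) + 1) := by
    rw [hydef, Real.mul_rpow hc.le (Real.rpow_nonneg hjR1.le _), ← Real.rpow_mul hjR1.le,
      one_div_mul_cancel hp.ne', Real.rpow_one]
  have hx1p : x ^ (1 - p) = c ^ (1 - p) * (j : ℝ) ^ ((1 - p) / p) := by
    rw [hxdef, Real.mul_rpow hc.le (Real.rpow_nonneg hjR.le _), ← Real.rpow_mul hjR.le,
      show (1 / p) * (1 - p) = (1 - p) / p by ring]
  have hy1p : y ^ (1 - p) = c ^ (1 - p) * ((j : ℝ) + 1) ^ ((1 - p) / p) := by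
    rw [hydef, Real.mul_rpow hc.le (Real.rpow_nonneg hjR1.le _), ← Real.rpow_mul hjR1.le,
      show (1 / p) * (1 - p) = (1 - p) / p by ring]
  have hsplit : ((j : ℝ) + 1) ^ ((1 - p) / p)
      = (((j : ℝ) + 1) / (j : ℝ)) ^ ((1 - p) / p) * (j : ℝ) ^ ((1 - p) / p) := by
    rw [Real.div_rpow hjR1.le hjR.le, div_mul_cancel₀]
    exact (Real.rpow_pos_of_pos hjR _).ne'
  have hHy : y ^ (1 - p) * Real.exp (-a * y ^ p) / (a * p)
      = (((j : ℝ) + 1) / (j : ℝ)) ^ ((1 - p) / p) *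
        (Real.exp (-(a * c ^ p)) * (x ^ (1 - p) * Real.exp (-a * x ^ p) / (a * p))) := by
    rw [hy1p, hsplit, hx1p, hxp, hyp]
    have eexp : Real.exp (-a * (c ^ p * ((j : ℝ) + 1)))
        = Real.exp (-(a * c ^ p)) * Real.exp (-a * (c ^ p * (j : ℝ))) := by
      rw [← Real.exp_add]; congr 1; ring
    rw [eexp]; ring
  have hQ0 : (0:ℝ) < (((j : ℝ) + 1) / (j : ℝ)) ^ ((1 - p) / p) :=
    Real.rpow_pos_of_pos (by positivity) _
  have hHx0 : (0:ℝ) ≤ x ^ (1 - p) * Real.exp (-a * x ^ p) / (a * p) := by positivity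
  have hεlt : (0:ℝ) < 1 - ε := by linarith
  have key : (1 - ε) * (∫ t in Ioi y, Real.exp (-a * t ^ p))
      ≤ (1 - ε) * (K₀ * ∫ t in Ioi x, Real.exp (-a * t ^ p)) := by
    have e : Real.exp s * Real.exp (-(a * c ^ p)) * Real.exp s = K₀ := by
      rw [hKdef, ← Real.exp_add, ← Real.exp_add]; congr 1; rw [hsdef]; ring
    calc (1 - ε) * (∫ t in Ioi y, Real.exp (-a * t ^ p))
        ≤ y ^ (1 - p) * Real.exp (-a * y ^ p) / (a * p) := h1
      _ = (((j : ℝ) + 1) / (j : ℝ)) ^ ((1 - p) / p) *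
          (Real.exp (-(a * c ^ p)) * (x ^ (1 - p) * Real.exp (-a * x ^ p) / (a * p))) := hHy
      _ ≤ Real.exp s *
          (Real.exp (-(a * c ^ p)) * ((1 + ε) * ∫ t in Ioi x, Real.exp (-a * t ^ p))) := by
          have hle2 : x ^ (1 - p) * Real.exp (-a * x ^ p) / (a * p)
              ≤ (1 + ε) * ∫ t in Ioi x, Real.exp (-a * t ^ p) := h2
          gcongr
      _ = (1 - ε) * (K₀ * ∫ t in Ioi x, Real.exp (-a * t ^ p)) := by
          rw [hplus, ← e]; ring
  exact le_of_mul_le_mul_left key hεlt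
end

section
/- Let γ > −1 and b, c > 0, set κ = 2bc^{1+γ}/(1+γ) and f_j = c·j^{1/(1+γ)} for positive integers j. Then there exist K₂ > 0 and J ∈ ℕ such that for all j ≥ J, (φ(f_j) − φ(f_{j+1}))/(φ(1) − φ(f_{j+1})) ≥ K₂ · j^{−γ/(1+γ)} · e^{−κ j}. -/
open Real Set MeasureTheory

lemma aux_integrable11 {a q : ℝ} (ha : 0 < a) (hq : 0 < q) :
    IntegrableOn (fun t : ℝ => Real.exp (-a * t ^ q)) (Ioi (0:ℝ)) := by
  have hs : (-1 : ℝ) < 1/q - 1 := by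
    have : 0 < 1/q := by positivity
    linarith
  have h1 : IntegrableOn (fun x : ℝ => x ^ (1/q - 1) * Real.exp (-a * x ^ (1:ℝ)))
      (Ioi (0:ℝ)) := integrableOn_rpow_mul_exp_neg_mul_rpow hs zero_lt_one ha
  have hfint : IntegrableOn (fun u : ℝ => (1/q) * (u ^ (1/q - 1) * Real.exp (-a * u)))
      (Ioi (0:ℝ)) := by
    apply Integrable.const_mul
    refine h1.congr_fun (fun x hx => ?_) measurableSet_Ioi
    simp only [Real.rpow_one]
  have h2 := (integrableOn_Ioi_comp_rpow_iff
      (fun u : ℝ => (1/q) * (u ^ (1/q - 1) * Real.exp (-a * u))) hq.ne').mpr hfint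
  refine h2.congr_fun (fun x hx => ?_) measurableSet_Ioi
  have hx0 : (0:ℝ) < x := hx
  have e1 : (x ^ q) ^ (1/q - 1) = x ^ (1 - q) := by
    rw [← Real.rpow_mul hx0.le]
    congr 1
    field_simp
  have e2 : x ^ (q - 1) * x ^ (1 - q) = 1 := by
    rw [← Real.rpow_add hx0]
    norm_num
  simp only [smul_eq_mul, abs_of_pos hq, e1]
  calc q * x ^ (q - 1) * (1 / q * (x ^ (1 - q) * Real.exp (-a * x ^ q)))
      = (x ^ (q - 1) * x ^ (1 - q)) * Real.exp (-a * x ^ q) * (q / q) := by ring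
    _ = Real.exp (-a * x ^ q) := by
        rw [e2, div_self hq.ne']; ring

lemma aux_mvt11 {p : ℝ} (hp : 0 < p) {x : ℝ} (hx : 1 ≤ x) :
    p * min 1 (2 ^ (p - 1)) * x ^ (p - 1) ≤ (x + 1) ^ p - x ^ p := by
  have hx0 : (0:ℝ) < x := lt_of_lt_of_le zero_lt_one hx
  obtain ⟨ξ, hξ, hslope⟩ := exists_hasDerivAt_eq_slope (fun t : ℝ => t ^ p)
      (fun t : ℝ => p * t ^ (p - 1)) (by linarith : x < x + 1)
      (by
        apply ContinuousOn.rpow_const continuousOn_id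
        intro t ht
        exact Or.inl (ne_of_gt (lt_of_lt_of_le hx0 ht.1)))
      (by
        intro t ht
        exact Real.hasDerivAt_rpow_const (Or.inl (ne_of_gt (lt_trans hx0 ht.1))))
  have hξ0 : (0:ℝ) < ξ := lt_trans hx0 hξ.1
  have key : (x + 1) ^ p - x ^ p = p * ξ ^ (p - 1) := by
    rw [hslope]; ring
  rw [key]
  have hmin : min 1 (2 ^ (p - 1)) * x ^ (p - 1) ≤ ξ ^ (p - 1) := by
    rcases le_or_gt 1 p with h1p | h1p
    · calc min 1 (2 ^ (p - 1)) * x ^ (p - 1) ≤ 1 * x ^ (p - 1) := by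
            apply mul_le_mul_of_nonneg_right (min_le_left _ _)
            positivity
        _ = x ^ (p - 1) := one_mul _
        _ ≤ ξ ^ (p - 1) := Real.rpow_le_rpow hx0.le hξ.1.le (by linarith)
    · have hz : p - 1 ≤ 0 := by linarith
      calc min 1 (2 ^ (p - 1)) * x ^ (p - 1) ≤ 2 ^ (p - 1) * x ^ (p - 1) := by
            apply mul_le_mul_of_nonneg_right (min_le_right _ _)
            positivity
        _ = (2 * x) ^ (p - 1) := by rw [Real.mul_rpow (by norm_num) hx0.le]
        _ ≤ (x + 1) ^ (p - 1) :=
            Real.rpow_le_rpow_of_nonpos (by linarith) (by linarith) hz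
        _ ≤ ξ ^ (p - 1) := Real.rpow_le_rpow_of_nonpos hξ0 hξ.2.le hz
  calc p * min 1 (2 ^ (p - 1)) * x ^ (p - 1)
      = p * (min 1 (2 ^ (p - 1)) * x ^ (p - 1)) := by ring
    _ ≤ p * ξ ^ (p - 1) := by exact mul_le_mul_of_nonneg_left hmin hp.le

/-- For `γ > -1`, `b, c > 0`, `κ = 2bc^{1+γ}/(1+γ)`, `f_j = c j^{1/(1+γ)}`, there exist
`K₂ > 0` and `J ∈ ℕ` with
`(φ(f_j) - φ(f_{j+1}))/(φ(1) - φ(f_{j+1})) ≥ K₂ j^{-γ/(1+γ)} e^{-κ j}` for all `j ≥ J`. -/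
theorem stmt_11 (γ b c : ℝ) (hγ : -1 < γ) (hb : 0 < b) (hc : 0 < c)
    (κ : ℝ) (hκ : κ = 2 * b * c ^ (1 + γ) / (1 + γ))
    (φ : ℝ → ℝ)
    (hφ : φ = fun x => ∫ t in Ioi x, Real.exp (-(2 * b / (1 + γ)) * t ^ (1 + γ)))
    (f : ℕ → ℝ) (hf : f = fun j : ℕ => c * (j : ℝ) ^ (1 / (1 + γ))) :
    ∃ K₂ > 0, ∃ J : ℕ, ∀ j : ℕ, J ≤ j →
      (φ (f j) - φ (f (j + 1))) / (φ 1 - φ (f (j + 1))) ≥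
        K₂ * (j : ℝ) ^ (-(γ / (1 + γ))) * Real.exp (-κ * j) := by
  have h1γ : 0 < 1 + γ := by linarith
  set a : ℝ := 2 * b / (1 + γ) with ha
  have ha0 : 0 < a := by positivity
  set p : ℝ := 1 / (1 + γ) with hp
  have hp0 : 0 < p := by positivity
  set g : ℝ → ℝ := fun t => Real.exp (-a * t ^ (1 + γ)) with hg
  have hgpos : ∀ t : ℝ, 0 < g t := fun t => Real.exp_pos _
  have hint : IntegrableOn g (Ioi (0:ℝ)) := aux_integrable11 ha0 h1γ
  have hIoi : ∀ x : ℝ, 0 < x → IntegrableOn g (Ioi x) :=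
    fun x hx => hint.mono_set (Ioi_subset_Ioi hx.le)
  have hφeq : ∀ x : ℝ, φ x = ∫ t in Ioi x, g t := by
    intro x; rw [hφ]
  -- splitting
  have hsplit : ∀ x y : ℝ, 0 < x → x ≤ y →
      φ x - φ y = ∫ t in Ioc x y, g t := by
    intro x y hx hxy
    have hu : Ioc x y ∪ Ioi y = Ioi x := Ioc_union_Ioi_eq_Ioi hxy
    have hdisj : Disjoint (Ioc x y) (Ioi y) := Ioc_disjoint_Ioi le_rfl
    rw [hφeq, hφeq, ← hu,
      setIntegral_union hdisj measurableSet_Ioi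
        ((hIoi x hx).mono_set (by rw [← hu]; exact subset_union_left))
        (hIoi y (lt_of_lt_of_le hx hxy))]
    ring
  -- constant lower bound for the integral over Ioc x y
  have hlow : ∀ x y : ℝ, 0 < x → x ≤ y →
      (y - x) * Real.exp (-a * y ^ (1 + γ)) ≤ ∫ t in Ioc x y, g t := by
    intro x y hx hxy
    have h1 : ∀ t ∈ Ioc x y, Real.exp (-a * y ^ (1 + γ)) ≤ g t := by
      intro t ht
      apply Real.exp_le_exp.mpr
      have htpow : t ^ (1 + γ) ≤ y ^ (1 + γ) :=
        Real.rpow_le_rpow (le_of_lt (lt_trans hx ht.1)) ht.2 h1γ.le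
      nlinarith [htpow, ha0]
    have := setIntegral_ge_of_const_le (c := Real.exp (-a * y ^ (1 + γ)))
      measurableSet_Ioc (by simp [Real.volume_Ioc]) h1
      ((hIoi x hx).mono_set Ioc_subset_Ioi_self)
    rwa [Real.volume_real_Ioc_of_le hxy, smul_eq_mul] at this
  have hφnonneg : ∀ x : ℝ, 0 ≤ φ x := by
    intro x
    rw [hφeq]
    exact setIntegral_nonneg measurableSet_Ioi fun t _ => (hgpos t).le
  have hφ1pos : 0 < φ 1 := by
    have h12 := hlow 1 2 zero_lt_one one_le_two
    have h2 : 0 < (2 - 1 : ℝ) * Real.exp (-a * (2:ℝ) ^ (1 + γ)) := by positivity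
    have := hsplit 1 2 zero_lt_one one_le_two
    nlinarith [hφnonneg 2]
  -- power identities
  have hppow : ∀ j : ℕ, (f j) ^ (1 + γ) = c ^ (1 + γ) * (j : ℝ) := by
    intro j
    rw [hf]
    simp only
    rw [Real.mul_rpow hc.le (Real.rpow_nonneg (Nat.cast_nonneg j) _)]
    congr 1
    rw [← Real.rpow_mul (Nat.cast_nonneg j)]
    have hpe : p * (1 + γ) = 1 := by rw [hp]; field_simp
    rw [hpe, Real.rpow_one]
  have hκ' : a * c ^ (1 + γ) = κ := by
    rw [hκ, ha]; ring
  set m : ℝ := min 1 (2 ^ (p - 1)) with hm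
  have hm0 : 0 < m := lt_min zero_lt_one (Real.rpow_pos_of_pos two_pos _)
  set K₂ : ℝ := c * p * m * Real.exp (-κ) / φ 1 with hK
  have hK0 : 0 < K₂ := by positivity
  refine ⟨K₂, hK0, ⌈(1/c) ^ (1 + γ)⌉₊ + 1, ?_⟩
  intro j hj
  have hj1 : 1 ≤ j := le_trans (by omega) hj
  have hjR : (1:ℝ) ≤ (j:ℝ) := by exact_mod_cast hj1
  -- f is positive and monotone enough
  have hfj : 0 < f j := by
    rw [hf]; positivity
  have hfmono : f j ≤ f (j + 1) := by
    rw [hf]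
    simp only
    apply mul_le_mul_of_nonneg_left _ hc.le
    apply Real.rpow_le_rpow (Nat.cast_nonneg j) (by push_cast; linarith) (by positivity)
  -- f (j+1) > 1
  have hf1 : 1 < f (j + 1) := by
    have hceil : ((1/c) ^ (1 + γ) : ℝ) < ((j : ℝ) + 1) := by
      calc ((1/c) ^ (1 + γ) : ℝ) ≤ (⌈(1/c) ^ (1 + γ)⌉₊ : ℝ) := Nat.le_ceil _
        _ ≤ (j : ℝ) := by exact_mod_cast le_trans (by omega) hj
        _ < (j : ℝ) + 1 := by linarith
    have h2 : ((1/c) ^ (1 + γ) : ℝ) ^ p < ((j : ℝ) + 1) ^ p :=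
      Real.rpow_lt_rpow (by positivity) hceil hp0
    have h3 : ((1/c) ^ (1 + γ) : ℝ) ^ p = 1 / c := by
      rw [← Real.rpow_mul (by positivity), hp, mul_one_div, div_self h1γ.ne', Real.rpow_one]
    rw [hf]
    simp only
    push_cast
    rw [h3] at h2
    calc (1:ℝ) = c * (1/c) := by field_simp
      _ < c * ((j:ℝ) + 1) ^ (1/(1+γ)) := by
          apply mul_lt_mul_of_pos_left _ hc
          exact h2
  -- numerator lower bound
  have hNsplit := hsplit (f j) (f (j + 1)) hfj hfmono
  have hexpval : Real.exp (-a * (f (j+1)) ^ (1 + γ)) = Real.exp (-κ) * Real.exp (-κ * j) := by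
    rw [hppow (j + 1), ← Real.exp_add]
    congr 1
    push_cast
    rw [← hκ']
    ring
  have hdiff : c * p * m * (j:ℝ) ^ (p - 1) ≤ f (j + 1) - f j := by
    have := aux_mvt11 hp0 hjR
    rw [hf]
    simp only
    push_cast
    nlinarith [this, hc]
  have hN : c * p * m * (j:ℝ) ^ (p - 1) * (Real.exp (-κ) * Real.exp (-κ * j)) ≤
      φ (f j) - φ (f (j + 1)) := by
    rw [hNsplit, ← hexpval]
    calc c * p * m * (j:ℝ) ^ (p - 1) * Real.exp (-a * (f (j+1)) ^ (1 + γ))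
        ≤ (f (j + 1) - f j) * Real.exp (-a * (f (j+1)) ^ (1 + γ)) := by
          apply mul_le_mul_of_nonneg_right hdiff (Real.exp_pos _).le
      _ ≤ ∫ t in Ioc (f j) (f (j + 1)), g t := hlow _ _ hfj hfmono
  -- denominator
  have hDsplit := hsplit 1 (f (j + 1)) zero_lt_one hf1.le
  have hD0 : 0 < φ 1 - φ (f (j + 1)) := by
    have h1 := hlow 1 (f (j + 1)) zero_lt_one hf1.le
    have h2 : 0 < (f (j + 1) - 1) * Real.exp (-a * (f (j+1)) ^ (1 + γ)) := by
      have : 0 < f (j + 1) - 1 := by linarith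
      positivity
    linarith [hDsplit ▸ le_trans h2.le h1]
  have hDle : φ 1 - φ (f (j + 1)) ≤ φ 1 := by linarith [hφnonneg (f (j + 1))]
  -- conclusion
  have hexpeq : -(γ / (1 + γ)) = p - 1 := by
    rw [hp]
    field_simp
    ring
  rw [ge_iff_le, hexpeq]
  have hRpos : 0 ≤ c * p * m * (j:ℝ) ^ (p - 1) * (Real.exp (-κ) * Real.exp (-κ * j)) := by
    positivity
  calc K₂ * (j:ℝ) ^ (p - 1) * Real.exp (-κ * j)
      = (c * p * m * (j:ℝ) ^ (p - 1) * (Real.exp (-κ) * Real.exp (-κ * j))) / φ 1 := by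
        rw [hK]; ring
    _ ≤ (φ (f j) - φ (f (j + 1))) / (φ 1 - φ (f (j + 1))) :=
        div_le_div₀ (by linarith) hN hD0 hDle
end

section
/- Let γ > −1, b > 0, and a > 0. Then lim_{t→∞} φ(a(log t)^{1/(1+γ)}) · 2b · (a(log t)^{1/(1+γ)})^{γ} · t^{2ba^{1+γ}/(1+γ)} = 1; that is, φ(a(log t)^{1/(1+γ)}) ∼ (1/(2b))(a(log t)^{1/(1+γ)})^{−γ} · t^{−2ba^{1+γ}/(1+γ)} as t → ∞. -/
open Real Set Filter MeasureTheory

lemma key_tail_asymp (c p : ℝ) (hc : 0 < c) (hp : 0 < p) :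
    Tendsto (fun x : ℝ =>
        (∫ t in Ioi x, Real.exp (-c * t ^ p)) * (c * p) * x ^ (p - 1) *
          Real.exp (c * x ^ p)) atTop (nhds 1) := by
  have hcp : (0 : ℝ) < c * p := mul_pos hc hp
  set F : ℝ → ℝ := fun t => Real.exp (-c * t ^ p) with hF
  have hFcont : Continuous F := by
    exact Real.continuous_exp.comp (continuous_const.mul
      (continuous_iff_continuousAt.mpr fun x =>
        Real.continuousAt_rpow_const x p (Or.inr hp.le)))
  -- Integrability on Ioi 1
  have hO : F =O[atTop] fun t : ℝ => t ^ (-2 : ℝ) := by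
    have h1 := ((isLittleO_exp_neg_mul_rpow_atTop hc (-2 / p)).isBigO).comp_tendsto
      (tendsto_rpow_atTop hp)
    have h2 : (fun t : ℝ => ((t ^ p) ^ (-2 / p))) =ᶠ[atTop] fun t : ℝ => t ^ (-2 : ℝ) := by
      filter_upwards [eventually_gt_atTop (0 : ℝ)] with t ht
      rw [← Real.rpow_mul ht.le]
      congr 1
      field_simp
    exact (h1.congr' EventuallyEq.rfl h2)
  have hint1 : IntegrableOn F (Ioi 1) := by
    refine (integrableOn_Ici_iff_integrableOn_Ioi (by finiteness)).mp ?_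
    exact ((hFcont.continuousOn).locallyIntegrableOn measurableSet_Ici).integrableOn_of_isBigO_atTop
      hO ⟨Ioi 1, Ioi_mem_atTop 1, integrableOn_Ioi_rpow_of_lt (by norm_num) one_pos⟩
  have hintx : ∀ x : ℝ, 1 ≤ x → IntegrableOn F (Ioi x) := fun x hx =>
    hint1.mono_set (Ioi_subset_Ioi hx)
  set I : ℝ → ℝ := fun x => ∫ t in Ioi x, F t with hI
  -- splitting
  have hsplit : ∀ x : ℝ, 1 ≤ x → I x = I 1 - ∫ t in (1:ℝ)..x, F t := by
    intro x hx
    have hu : Ioc 1 x ∪ Ioi x = Ioi (1:ℝ) := Ioc_union_Ioi_eq_Ioi hx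
    have hd : Disjoint (Ioc (1:ℝ) x) (Ioi x) := Ioc_disjoint_Ioi le_rfl
    have := MeasureTheory.setIntegral_union hd measurableSet_Ioi
      (hint1.mono_set Ioc_subset_Ioi_self) (hintx x hx)
    rw [hu] at this
    rw [intervalIntegral.integral_of_le hx]
    simp only [hI]
    rw [this]
    ring
  -- f tends to 0
  have hf0 : Tendsto I atTop (nhds 0) := by
    have h1 : Tendsto (fun x : ℝ => I 1 - ∫ t in (1:ℝ)..x, F t) atTop (nhds (I 1 - I 1)) :=
      tendsto_const_nhds.sub
        (MeasureTheory.intervalIntegral_tendsto_integral_Ioi 1 hint1 tendsto_id)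
    rw [sub_self] at h1
    refine h1.congr' ?_
    filter_upwards [eventually_ge_atTop (1:ℝ)] with x hx
    exact (hsplit x hx).symm
  -- g
  set G : ℝ → ℝ := fun x => Real.exp (-c * x ^ p) * ((c * p)⁻¹ * x ^ (1 - p)) with hG
  have hg0 : Tendsto G atTop (nhds 0) := by
    have h1 : Tendsto (fun y : ℝ => y ^ ((1 - p) / p) * Real.exp (-c * y)) atTop (nhds 0) :=
      tendsto_rpow_mul_exp_neg_mul_atTop_nhds_zero _ c hc
    have h2 := (h1.comp (tendsto_rpow_atTop hp)).const_mul (c * p)⁻¹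
    rw [mul_zero] at h2
    refine h2.congr' ?_
    filter_upwards [eventually_gt_atTop (0:ℝ)] with x hx
    simp only [Function.comp, hG]
    rw [← Real.rpow_mul hx.le]
    have : p * ((1 - p) / p) = 1 - p := by field_simp
    rw [this]
    ring
  -- derivatives
  set u : ℝ → ℝ := fun x => 1 + (p - 1) * (c * p)⁻¹ * x ^ (-p) with hu
  set G' : ℝ → ℝ := fun x => -Real.exp (-c * x ^ p) * u x with hG'
  have hIderiv : ∀ᶠ x in atTop, HasDerivAt I (-F x) x := by
    filter_upwards [eventually_gt_atTop (1:ℝ)] with x hx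
    have h1 : HasDerivAt (fun y => ∫ t in (1:ℝ)..y, F t) (F x) x := by
      refine intervalIntegral.integral_hasDerivAt_right ?_ ?_ (hFcont.continuousAt)
      · exact (hFcont.intervalIntegrable 1 x)
      · exact hFcont.stronglyMeasurable.stronglyMeasurableAtFilter
    have h2 := (hasDerivAt_const x (I 1)).sub h1
    rw [zero_sub] at h2
    refine h2.congr_of_eventuallyEq ?_
    filter_upwards [eventually_gt_nhds hx] with y hy
    exact hsplit y hy.le
  have hGderiv : ∀ᶠ x in atTop, HasDerivAt G (G' x) x := by
    filter_upwards [eventually_gt_atTop (1:ℝ)] with x hx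
    have hx0 : (0:ℝ) < x := lt_trans one_pos hx
    have hA : HasDerivAt (fun y : ℝ => Real.exp (-c * y ^ p))
        (Real.exp (-c * x ^ p) * (-c * (p * x ^ (p - 1)))) x :=
      (((Real.hasDerivAt_rpow_const (Or.inl hx0.ne'))).const_mul (-c)).exp
    have hB : HasDerivAt (fun y : ℝ => (c * p)⁻¹ * y ^ (1 - p))
        ((c * p)⁻¹ * ((1 - p) * x ^ (1 - p - 1))) x :=
      ((Real.hasDerivAt_rpow_const (p := 1 - p) (Or.inl hx0.ne'))).const_mul _
    have h := hA.mul hB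
    convert h using 1
    · rfl
    · rfl
    · rfl
    have e1 : x ^ (p - 1) * x ^ (1 - p) = 1 := by
      rw [← Real.rpow_add hx0]; norm_num
    have e2 : x ^ (1 - p - 1) = x ^ (-p) := by norm_num
    simp only [hG', hu]
    rw [e2] at *
    have : Real.exp (-c * x ^ p) * (-c * (p * x ^ (p - 1))) * ((c * p)⁻¹ * x ^ (1 - p))
        + Real.exp (-c * x ^ p) * ((c * p)⁻¹ * ((1 - p) * x ^ (-p)))
        = -Real.exp (-c * x ^ p) * ((c * p) * (c * p)⁻¹ * (x ^ (p - 1) * x ^ (1 - p)))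
          + Real.exp (-c * x ^ p) * ((c * p)⁻¹ * ((1 - p) * x ^ (-p))) := by ring
    rw [this, e1, mul_inv_cancel₀ hcp.ne']
    ring
  have hulim : Tendsto u atTop (nhds 1) := by
    have h1 := (tendsto_rpow_neg_atTop hp).const_mul ((p - 1) * (c * p)⁻¹)
    rw [mul_zero] at h1
    have := tendsto_const_nhds (x := (1:ℝ)) (f := atTop (α := ℝ)) |>.add h1
    rw [add_zero] at this
    simpa [hu, mul_assoc] using this
  have huev : ∀ᶠ x in atTop, u x ≠ 0 := by
    have := hulim.eventually_ne (by norm_num : (1:ℝ) ≠ 0)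
    exact this
  have hG'ne : ∀ᶠ x in atTop, G' x ≠ 0 := by
    filter_upwards [huev] with x hx
    simp only [hG']
    exact mul_ne_zero (neg_ne_zero.mpr (Real.exp_ne_zero _)) hx
  have hdiv : Tendsto (fun x => (-F x) / G' x) atTop (nhds 1) := by
    have h1 : Tendsto (fun x => (u x)⁻¹) atTop (nhds 1) := by
      have := hulim.inv₀ (by norm_num)
      simpa using this
    refine h1.congr' ?_
    filter_upwards [huev] with x hx
    simp only [hG', hF]
    have hE : rexp (-c * x ^ p) ≠ 0 := Real.exp_ne_zero _
    have e : -rexp (-c * x ^ p) * u x = -(rexp (-c * x ^ p) * u x) := neg_mul _ _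
    rw [e, neg_div_neg_eq, div_mul_cancel_left₀ hE]
  have hmain : Tendsto (fun x => I x / G x) atTop (nhds 1) :=
    HasDerivAt.lhopital_zero_atTop hIderiv hGderiv hG'ne hf0 hg0 hdiv
  refine hmain.congr' ?_
  filter_upwards [eventually_gt_atTop (0:ℝ)] with x hx
  have hGne : G x ≠ 0 := by
    simp only [hG]
    positivity
  rw [div_eq_iff hGne]
  simp only [hG, hI]
  refine Eq.symm ?_
  have e1 : Real.exp (c * x ^ p) * Real.exp (-c * x ^ p) = 1 := by
    rw [← Real.exp_add]; norm_num
  have e2 : x ^ (p - 1) * x ^ (1 - p) = 1 := by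
    rw [← Real.rpow_add hx]; norm_num
  calc (∫ t in Ioi x, F t) * (c * p) * x ^ (p - 1) * Real.exp (c * x ^ p) *
        (Real.exp (-c * x ^ p) * ((c * p)⁻¹ * x ^ (1 - p)))
      = (∫ t in Ioi x, F t) * ((c * p) * (c * p)⁻¹) * (x ^ (p - 1) * x ^ (1 - p)) *
        (Real.exp (c * x ^ p) * Real.exp (-c * x ^ p)) := by ring
    _ = ∫ t in Ioi x, F t := by
        rw [e1, e2, mul_inv_cancel₀ hcp.ne']; ring

/-- For `γ > -1`, `b > 0`, `a > 0`, with `φ(x) = ∫_x^∞ exp(-(2b/(1+γ)) t^{1+γ}) dt`: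
`φ(a (log t)^{1/(1+γ)}) ∼ (1/(2b)) (a (log t)^{1/(1+γ)})^{-γ} t^{-2ba^{1+γ}/(1+γ)}`
as `t → ∞`. -/
theorem stmt_12 (γ b a : ℝ) (hγ : -1 < γ) (hb : 0 < b) (ha : 0 < a)
    (φ : ℝ → ℝ)
    (hφ : φ = fun x => ∫ t in Ioi x, Real.exp (-(2 * b / (1 + γ)) * t ^ (1 + γ))) :
    Tendsto (fun t : ℝ =>
        φ (a * Real.log t ^ (1 / (1 + γ))) * (2 * b) *
          (a * Real.log t ^ (1 / (1 + γ))) ^ γ * t ^ (2 * b * a ^ (1 + γ) / (1 + γ)))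
      atTop (nhds 1) := by
  have hp : (0:ℝ) < 1 + γ := by linarith
  set p := 1 + γ with hpdef
  have key := key_tail_asymp (2 * b / p) p (by positivity) hp
  have hxlim : Tendsto (fun t : ℝ => a * Real.log t ^ (1 / p)) atTop atTop := by
    refine Tendsto.const_mul_atTop ha ?_
    exact (tendsto_rpow_atTop (by positivity)).comp tendsto_log_atTop
  have hcomp := key.comp hxlim
  refine hcomp.congr' ?_
  filter_upwards [eventually_gt_atTop (1:ℝ)] with t ht
  have hlt : 0 < Real.log t := Real.log_pos ht
  set x := a * Real.log t ^ (1 / p) with hxdef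
  have hx0 : 0 < x := by positivity
  have hxp : x ^ p = a ^ p * Real.log t := by
    rw [hxdef, Real.mul_rpow ha.le (Real.rpow_nonneg hlt.le _),
      ← Real.rpow_mul hlt.le, one_div, inv_mul_cancel₀ hp.ne', Real.rpow_one]
  have hexp : t ^ (2 * b * a ^ p / p) = Real.exp (2 * b / p * x ^ p) := by
    rw [Real.rpow_def_of_pos (lt_trans one_pos ht), hxp]
    congr 1
    ring
  have hcp : 2 * b / p * p = 2 * b := by field_simp
  have hpm : p - 1 = γ := by rw [hpdef]; ring
  simp only [Function.comp_apply]
  rw [hφ, hexp, hcp, hpm]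
end
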